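/- arXiv:cond-mat/9704175 — 2 statements merged into one kernel-verified Lean document; each statement's English description precedes it below -/
import Mathlib

section
/- The function Φ(x,y) := (-1/(27|x|y²))·(2(1+3y)^{3/2} - sgn(x)(2+9y)), defined for x > 0 and 0 < y < 1/3, is monotonically increasing in y, and satisfies the expansion Φ(x,y) = (-1/(4x))(1 - y/2 + O(y²)) as y → 0⁺. -/
open Real Asymptotics Filter Set

lemma Phi_key (x y : ℝ) (hx : x ≠ 0) (hy : 0 < y) :
    (-1 / (27 * x * y ^ 2)) * (2 * (1 + 3 * y) ^ ((3:ℝ)/2) - (2 + 9 * y))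
      = -(2 * Real.sqrt (1 + 3*y) + 1) / (3 * x * (Real.sqrt (1 + 3*y) + 1) ^ 2) := by
  set s := Real.sqrt (1 + 3*y) with hs
  have h0 : (0:ℝ) ≤ 1 + 3*y := by linarith
  have hs2 : s ^ 2 = 1 + 3*y := Real.sq_sqrt h0
  have hs1 : 1 < s := by
    nlinarith [Real.sqrt_nonneg (1+3*y), hs2]
  have hr : (1 + 3*y) ^ ((3:ℝ)/2) = s ^ 3 := by
    rw [show ((3:ℝ)/2) = (1/2 : ℝ) * 3 by norm_num, Real.rpow_mul h0,
      ← Real.sqrt_eq_rpow, show ((3:ℝ)) = ((3:ℕ):ℝ) by norm_num, Real.rpow_natCast]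
    norm_num
    rfl
  rw [hr]
  have hnum : 2 * s ^ 3 - (2 + 9*y) = (s - 1) ^ 2 * (2*s + 1) := by
    linear_combination 3 * hs2
  have hy2 : y ^ 2 = (s - 1) ^ 2 * (s + 1) ^ 2 / 9 := by
    linear_combination (-(s^2 - 1 + 3*y)/9) * hs2
  rw [show 2 * s ^ 3 - (2 + 9 * y) = (s-1)^2 * (2*s+1) by linarith [hnum], hy2]
  have h1 : s - 1 ≠ 0 := by linarith
  have h2 : s + 1 ≠ 0 := by linarith
  field_simp
  ring


/-- The function Φ(x,y) = (-1/(27xy²))(2(1+3y)^{3/2} - (2+9y)) for x > 0 is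
monotonically increasing in y on (0,1/3), and Φ(x,y) = (-1/(4x))(1 - y/2) + O(y²)
as y → 0⁺. -/
theorem Phi_monotone_and_expansion (x : ℝ) (hx : 0 < x) :
    (∀ y₁ ∈ Ioo (0:ℝ) (1/3), ∀ y₂ ∈ Ioo (0:ℝ) (1/3), y₁ < y₂ →
      (-1 / (27 * x * y₁ ^ 2)) * (2 * (1 + 3 * y₁) ^ ((3:ℝ)/2) - (2 + 9 * y₁))
        < (-1 / (27 * x * y₂ ^ 2)) * (2 * (1 + 3 * y₂) ^ ((3:ℝ)/2) - (2 + 9 * y₂))) ∧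
    (fun y : ℝ =>
        (-1 / (27 * x * y ^ 2)) * (2 * (1 + 3 * y) ^ ((3:ℝ)/2) - (2 + 9 * y))
          - (-1 / (4 * x)) * (1 - y / 2))
      =O[nhdsWithin 0 (Ioi 0)] (fun y : ℝ => y ^ 2) := by
  constructor
  · intro y₁ hy₁ y₂ hy₂ h12
    obtain ⟨h1, h1'⟩ := hy₁
    obtain ⟨h2, h2'⟩ := hy₂
    rw [Phi_key x y₁ hx.ne' h1, Phi_key x y₂ hx.ne' h2]
    set s₁ := Real.sqrt (1 + 3*y₁) with hs₁
    set s₂ := Real.sqrt (1 + 3*y₂) with hs₂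
    have hq1 : s₁ ^ 2 = 1 + 3*y₁ := Real.sq_sqrt (by linarith)
    have hq2 : s₂ ^ 2 = 1 + 3*y₂ := Real.sq_sqrt (by linarith)
    have hg1 : 1 < s₁ := by nlinarith [Real.sqrt_nonneg (1+3*y₁)]
    have hg2 : 1 < s₂ := by nlinarith [Real.sqrt_nonneg (1+3*y₂)]
    have hlt : s₁ < s₂ := Real.sqrt_lt_sqrt (by linarith) (by linarith)
    rw [div_lt_div_iff₀ (by positivity) (by positivity)]
    nlinarith [mul_pos (mul_pos hx (sub_pos.mpr hlt))
      (show (0:ℝ) < 2*s₁*s₂ + s₁ + s₂ by nlinarith)]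
  · rw [Asymptotics.isBigO_iff]
    refine ⟨1/x, ?_⟩
    filter_upwards [Ioo_mem_nhdsGT_of_mem
      (show (0:ℝ) ∈ Ico (0:ℝ) (1/3) from ⟨le_refl 0, by norm_num⟩)] with y hy
    obtain ⟨hy0, hy3⟩ := hy
    rw [Phi_key x y hx.ne' hy0]
    set s := Real.sqrt (1 + 3*y) with hs
    have hs2 : s ^ 2 = 1 + 3*y := Real.sq_sqrt (by linarith)
    have hg1 : 1 < s := by nlinarith [Real.sqrt_nonneg (1+3*y)]
    have hg2 : s < 2 := by nlinarith
    have hD : -(2*s + 1) / (3 * x * (s + 1) ^ 2) - (-1 / (4 * x)) * (1 - y/2)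
        = -(3 * y^2 * (s^2 + 4*s + 1)) / (8 * x * (s + 1)^4) := by
      have h2 : s + 1 ≠ 0 := by linarith
      have hyv : y = (s^2 - 1)/3 := by linarith
      rw [hyv]
      field_simp
      ring
    rw [hD, Real.norm_eq_abs, Real.norm_eq_abs]
    have hDneg : -(3 * y^2 * (s^2 + 4*s + 1)) / (8 * x * (s + 1)^4) ≤ 0 := by
      apply div_nonpos_of_nonpos_of_nonneg
      · nlinarith [sq_nonneg y]
      · positivity
    rw [abs_of_nonpos hDneg, abs_of_nonneg (sq_nonneg y), show (1/x) * y^2 = y^2/x by ring,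
      neg_div, neg_neg, div_le_div_iff₀ (by positivity) hx]
    nlinarith [mul_nonneg (mul_nonneg hx.le (sq_nonneg y))
      (show (0:ℝ) ≤ 8*(s+1)^4 - 3*(s^2 + 4*s + 1) by nlinarith)]
end

section
/- Define f(ν) = arcsinh(ν/√3) + (ν/6)√(3+ν²) + (ν³/(6√3)) log(ν/(√3 + √(3+ν²))) for ν > 0. Then f is strictly increasing on (0,∞), f(ν) → 0 as ν → 0⁺, and f(ν) → ∞ as ν → ∞; hence for each λ > 0 the equation 1/λ = f(ν) has a unique solution ν > 0. -/
open Real Filter Set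

noncomputable def gapF (ν : ℝ) : ℝ :=
  Real.arsinh (ν / Real.sqrt 3) + ν / 6 * Real.sqrt (3 + ν ^ 2)
    + ν ^ 3 / (6 * Real.sqrt 3)
      * Real.log (ν / (Real.sqrt 3 + Real.sqrt (3 + ν ^ 2)))

noncomputable def gapD (ν : ℝ) : ℝ :=
  Real.sqrt (3 + ν ^ 2) / 2
    + ν ^ 2 / (2 * Real.sqrt 3) * Real.log (ν / (Real.sqrt 3 + Real.sqrt (3 + ν ^ 2)))

lemma sqrt3_pos : (0:ℝ) < Real.sqrt 3 := Real.sqrt_pos.mpr (by norm_num)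

lemma s_pos (ν : ℝ) : (0:ℝ) < Real.sqrt (3 + ν ^ 2) :=
  Real.sqrt_pos.mpr (by positivity)

lemma gap_hasDerivAt {ν : ℝ} (hν : 0 < ν) : HasDerivAt gapF (gapD ν) ν := by
  have h3 : (0:ℝ) ≤ 3 := by norm_num
  set s := Real.sqrt (3 + ν ^ 2) with hs
  have hsp : 0 < s := s_pos ν
  have hssq : s ^ 2 = 3 + ν ^ 2 := Real.sq_sqrt (by positivity)
  have h3sq : (Real.sqrt 3) ^ 2 = 3 := Real.sq_sqrt h3
  have hds : 0 < Real.sqrt 3 + s := by positivity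
  -- term 1
  have h1 : HasDerivAt (fun x : ℝ => Real.arsinh (x / Real.sqrt 3))
      ((Real.sqrt (1 + (ν / Real.sqrt 3) ^ 2))⁻¹ * (1 / Real.sqrt 3)) ν := by
    exact HasDerivAt.arsinh ((hasDerivAt_id ν).div_const _)
  -- sqrt inner
  have hin : HasDerivAt (fun x : ℝ => 3 + x ^ 2) (2 * ν) ν := by
    simpa using ((hasDerivAt_pow 2 ν).const_add 3)
  have hsq : HasDerivAt (fun x : ℝ => Real.sqrt (3 + x ^ 2)) (2 * ν / (2 * s)) ν :=
    hin.sqrt (by positivity)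
  -- term 2
  have h2 : HasDerivAt (fun x : ℝ => x / 6 * Real.sqrt (3 + x ^ 2))
      (1 / 6 * s + ν / 6 * (2 * ν / (2 * s))) ν :=
    ((hasDerivAt_id ν).div_const 6).mul hsq
  -- quotient inside log
  have hden : HasDerivAt (fun x : ℝ => Real.sqrt 3 + Real.sqrt (3 + x ^ 2))
      (2 * ν / (2 * s)) ν := hsq.const_add _
  have hq : HasDerivAt (fun x : ℝ => x / (Real.sqrt 3 + Real.sqrt (3 + x ^ 2)))
      ((1 * (Real.sqrt 3 + s) - ν * (2 * ν / (2 * s))) / (Real.sqrt 3 + s) ^ 2) ν :=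
    (hasDerivAt_id ν).div hden (ne_of_gt hds)
  have hqν : ν / (Real.sqrt 3 + s) ≠ 0 := by positivity
  have hlog : HasDerivAt (fun x : ℝ => Real.log (x / (Real.sqrt 3 + Real.sqrt (3 + x ^ 2))))
      ((1 * (Real.sqrt 3 + s) - ν * (2 * ν / (2 * s))) / (Real.sqrt 3 + s) ^ 2
        / (ν / (Real.sqrt 3 + s))) ν := hq.log hqν
  have hcub : HasDerivAt (fun x : ℝ => x ^ 3 / (6 * Real.sqrt 3))
      (3 * ν ^ 2 / (6 * Real.sqrt 3)) ν := by
    simpa using (hasDerivAt_pow 3 ν).div_const (6 * Real.sqrt 3)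
  have h3t : HasDerivAt (fun x : ℝ => x ^ 3 / (6 * Real.sqrt 3)
      * Real.log (x / (Real.sqrt 3 + Real.sqrt (3 + x ^ 2))))
      (3 * ν ^ 2 / (6 * Real.sqrt 3) * Real.log (ν / (Real.sqrt 3 + s))
        + ν ^ 3 / (6 * Real.sqrt 3) *
          ((1 * (Real.sqrt 3 + s) - ν * (2 * ν / (2 * s))) / (Real.sqrt 3 + s) ^ 2
            / (ν / (Real.sqrt 3 + s)))) ν := hcub.mul hlog
  have := (h1.add h2).add h3t
  convert this using 1
  · rfl
  · rfl
  · rfl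
  have hone : Real.sqrt (1 + (ν / Real.sqrt 3) ^ 2) = s / Real.sqrt 3 := by
    rw [div_pow, h3sq, show (1 : ℝ) + ν ^ 2 / 3 = (3 + ν ^ 2) / 3 by ring,
      Real.sqrt_div (by positivity) 3]
  rw [hone]
  have hnum : 1 * (Real.sqrt 3 + s) - ν * (2 * ν / (2 * s)) = Real.sqrt 3 * (Real.sqrt 3 + s) / s := by
    field_simp
    nlinarith [hssq, h3sq]
  have hX : (1 * (Real.sqrt 3 + s) - ν * (2 * ν / (2 * s)) ) / (Real.sqrt 3 + s) ^ 2
      / (ν / (Real.sqrt 3 + s)) = Real.sqrt 3 / (s * ν) := by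
    rw [hnum]; field_simp
  rw [hX]
  have e1 : (s / Real.sqrt 3)⁻¹ * (1 / Real.sqrt 3) = 1 / s := by
    rw [inv_div]
    field_simp
  rw [e1]
  simp only [gapD]
  have h6 : ν ^ 3 / (6 * Real.sqrt 3) * (Real.sqrt 3 / (s * ν)) = ν ^ 2 / (6 * s) := by
    rw [div_mul_div_comm, div_eq_div_iff (by positivity) (by positivity)]
    ring
  rw [h6]
  have h7 : 3 * ν ^ 2 / (6 * Real.sqrt 3) = ν ^ 2 / (2 * Real.sqrt 3) := by ring
  rw [h7]
  have h8 : 1 / s + (1 / 6 * s + ν / 6 * (2 * ν / (2 * s))) + ν ^ 2 / (6 * s) = s / 2 := by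
    have hs0 : s ≠ 0 := ne_of_gt hsp
    field_simp
    nlinarith [hssq]
  linarith [h8]


lemma nu_lt_s {ν : ℝ} (hν : 0 < ν) : ν < Real.sqrt (3 + ν ^ 2) := by
  exact (Real.lt_sqrt hν.le).mpr (by linarith)

lemma arsinh_lt_self {u : ℝ} (hu : 0 < u) : Real.arsinh u < u := by
  calc Real.arsinh u < Real.arsinh (Real.sinh u) :=
        Real.arsinh_lt_arsinh.mpr (Real.self_lt_sinh_iff.mpr hu)
    _ = u := Real.arsinh_sinh u

lemma log_eq_arsinh {ν : ℝ} (hν : 0 < ν) :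
    Real.log (ν / (Real.sqrt 3 + Real.sqrt (3 + ν ^ 2)))
      = - Real.arsinh (Real.sqrt 3 / ν) := by
  have hsp : 0 < Real.sqrt (3 + ν ^ 2) := s_pos ν
  have hds : 0 < Real.sqrt 3 + Real.sqrt (3 + ν ^ 2) := by positivity
  have h1 : Real.sqrt (1 + (Real.sqrt 3 / ν) ^ 2) = Real.sqrt (3 + ν ^ 2) / ν := by
    rw [div_pow, Real.sq_sqrt (by norm_num : (0:ℝ) ≤ 3),
      show (1 : ℝ) + 3 / ν ^ 2 = (3 + ν ^ 2) / ν ^ 2 by field_simp; ring,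
      Real.sqrt_div (by positivity) _, Real.sqrt_sq hν.le]
  rw [Real.arsinh, h1, Real.log_div (ne_of_gt hν) (ne_of_gt hds), ← add_div,
    Real.log_div (by positivity) (ne_of_gt hν)]
  ring

lemma gapD_gt {ν : ℝ} (hν : 0 < ν) : (Real.sqrt (3 + ν ^ 2) - ν) / 2 < gapD ν := by
  have hsp : 0 < Real.sqrt (3 + ν ^ 2) := s_pos ν
  have h3p : (0:ℝ) < Real.sqrt 3 := sqrt3_pos
  have harc : Real.arsinh (Real.sqrt 3 / ν) < Real.sqrt 3 / ν :=
    arsinh_lt_self (by positivity)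
  have hcoef : 0 < ν ^ 2 / (2 * Real.sqrt 3) := by positivity
  have : ν ^ 2 / (2 * Real.sqrt 3) * Real.arsinh (Real.sqrt 3 / ν)
      < ν ^ 2 / (2 * Real.sqrt 3) * (Real.sqrt 3 / ν) := by
    exact (mul_lt_mul_iff_right₀ hcoef).mpr harc
  have hval : ν ^ 2 / (2 * Real.sqrt 3) * (Real.sqrt 3 / ν) = ν / 2 := by
    field_simp
  simp only [gapD, log_eq_arsinh hν]
  nlinarith [this, hval]

lemma gapD_pos {ν : ℝ} (hν : 0 < ν) : 0 < gapD ν :=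
  lt_trans (by linarith [nu_lt_s hν]) (gapD_gt hν)

lemma gapD_ge {ν : ℝ} (hν : Real.sqrt 3 ≤ ν) : 1 / (2 * ν) ≤ gapD ν := by
  have h3p : (0:ℝ) < Real.sqrt 3 := sqrt3_pos
  have hν0 : 0 < ν := lt_of_lt_of_le h3p hν
  have hsp : 0 < Real.sqrt (3 + ν ^ 2) := s_pos ν
  have hub : Real.sqrt (3 + ν ^ 2) ≤ Real.sqrt 3 + ν := by
    rw [show Real.sqrt 3 + ν = Real.sqrt ((Real.sqrt 3 + ν) ^ 2) by
      rw [Real.sqrt_sq (by positivity)]]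
    apply Real.sqrt_le_sqrt
    nlinarith [Real.sq_sqrt (by norm_num : (0:ℝ) ≤ 3), mul_pos h3p hν0]
  -- (s - ν)(s + ν) = 3
  have hprod : (Real.sqrt (3 + ν ^ 2) - ν) * (Real.sqrt (3 + ν ^ 2) + ν) = 3 := by
    have := Real.sq_sqrt (show (0:ℝ) ≤ 3 + ν ^ 2 by positivity)
    nlinarith [this]
  have hsum : Real.sqrt (3 + ν ^ 2) + ν ≤ 3 * ν := by linarith
  have hkey : 1 / ν ≤ Real.sqrt (3 + ν ^ 2) - ν := by
    rw [div_le_iff₀ hν0]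
    have hsum0 : 0 < Real.sqrt (3 + ν ^ 2) + ν := by positivity
    have hd : 0 < Real.sqrt (3 + ν ^ 2) - ν := by linarith [nu_lt_s hν0]
    calc (1:ℝ) = (Real.sqrt (3 + ν ^ 2) - ν) * (Real.sqrt (3 + ν ^ 2) + ν) / 3 := by
          rw [hprod]; norm_num
      _ ≤ (Real.sqrt (3 + ν ^ 2) - ν) * (3 * ν) / 3 := by
          apply div_le_div_of_nonneg_right ?_ (by norm_num)
          exact mul_le_mul_of_nonneg_left hsum hd.le
      _ = (Real.sqrt (3 + ν ^ 2) - ν) * ν := by ring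
  have := gapD_gt hν0
  have h1 : 1 / (2 * ν) = (1 / ν) / 2 := by ring
  rw [h1]
  linarith

lemma gapF_contAt {ν : ℝ} (hν : 0 < ν) : ContinuousAt gapF ν :=
  (gap_hasDerivAt hν).differentiableAt.continuousAt

lemma gapF_mono : StrictMonoOn gapF (Ioi 0) := by
  apply strictMonoOn_of_deriv_pos (convex_Ioi 0)
  · exact fun x hx => (gapF_contAt hx).continuousWithinAt
  · intro x hx
    rw [interior_Ioi] at hx
    rw [(gap_hasDerivAt hx).deriv]
    exact gapD_pos hx

lemma gapF_tendsto_zero : Tendsto gapF (nhdsWithin 0 (Ioi 0)) (nhds 0) := by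
  have h3p : (0:ℝ) < Real.sqrt 3 := sqrt3_pos
  have h1 : Tendsto (fun ν : ℝ => Real.arsinh (ν / Real.sqrt 3)) (nhdsWithin 0 (Ioi 0))
      (nhds 0) := by
    have : Continuous fun ν : ℝ => Real.arsinh (ν / Real.sqrt 3) :=
      Real.continuous_arsinh.comp (continuous_id.div_const _)
    exact (this.tendsto' 0 0 (by simp)).mono_left nhdsWithin_le_nhds
  have h2 : Tendsto (fun ν : ℝ => ν / 6 * Real.sqrt (3 + ν ^ 2)) (nhdsWithin 0 (Ioi 0))
      (nhds 0) := by
    have hc : Continuous fun ν : ℝ => ν / 6 * Real.sqrt (3 + ν ^ 2) :=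
      (continuous_id.div_const 6).mul ((continuous_const.add (continuous_pow 2)).sqrt)
    exact (hc.tendsto' 0 0 (by simp)).mono_left nhdsWithin_le_nhds
  have hA : Tendsto (fun ν : ℝ => ν ^ 3 / (6 * Real.sqrt 3) * Real.log ν)
      (nhdsWithin 0 (Ioi 0)) (nhds 0) := by
    have hmul : Tendsto (fun ν : ℝ => (Real.log ν * ν ^ (2:ℝ)) * (ν / (6 * Real.sqrt 3)))
        (nhdsWithin 0 (Ioi 0)) (nhds 0) := by
      have ht1 := tendsto_log_mul_rpow_nhdsGT_zero (show (0:ℝ) < 2 by norm_num)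
      have ht2 : Tendsto (fun ν : ℝ => ν / (6 * Real.sqrt 3)) (nhdsWithin 0 (Ioi 0))
          (nhds 0) := by
        have : Continuous fun ν : ℝ => ν / (6 * Real.sqrt 3) :=
          continuous_id.div_const _
        exact (this.tendsto' 0 0 (by simp)).mono_left nhdsWithin_le_nhds
      simpa using ht1.mul ht2
    apply hmul.congr'
    filter_upwards [self_mem_nhdsWithin] with x hx
    rw [Real.rpow_two]
    ring
  have hB : Tendsto (fun ν : ℝ => ν ^ 3 / (6 * Real.sqrt 3)
      * Real.log (Real.sqrt 3 + Real.sqrt (3 + ν ^ 2))) (nhdsWithin 0 (Ioi 0)) (nhds 0) := by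
    have hc : Continuous fun ν : ℝ => ν ^ 3 / (6 * Real.sqrt 3) :=
      (continuous_pow 3).div_const _
    have hlc : ContinuousAt (fun ν : ℝ => Real.log (Real.sqrt 3 + Real.sqrt (3 + ν ^ 2)))
        0 := by
      apply (Real.continuousAt_log ?_).comp
      · exact (continuous_const.add ((continuous_const.add (continuous_pow 2)).sqrt)).continuousAt
      · have := s_pos (0:ℝ)
        positivity
    have := (hc.tendsto 0).mul hlc
    simp only [ne_eq, OfNat.ofNat_ne_zero, not_false_eq_true, zero_pow, zero_div,
      zero_mul] at this
    exact this.mono_left nhdsWithin_le_nhds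
  have h3 : Tendsto (fun ν : ℝ => ν ^ 3 / (6 * Real.sqrt 3)
      * Real.log (ν / (Real.sqrt 3 + Real.sqrt (3 + ν ^ 2)))) (nhdsWithin 0 (Ioi 0))
      (nhds 0) := by
    have := hA.sub hB
    rw [sub_zero] at this
    apply this.congr'
    filter_upwards [self_mem_nhdsWithin] with x (hx : 0 < x)
    have hds : 0 < Real.sqrt 3 + Real.sqrt (3 + x ^ 2) := by
      have := s_pos x; positivity
    rw [Real.log_div (ne_of_gt hx) (ne_of_gt hds)]
    ring
  have := (h1.add h2).add h3
  rw [add_zero, add_zero] at this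
  exact this

lemma gapF_tendsto_atTop : Tendsto gapF atTop atTop := by
  have h3p : (0:ℝ) < Real.sqrt 3 := sqrt3_pos
  set G : ℝ → ℝ := fun x => gapF x - 1 / 2 * Real.log x with hG
  have hGd : ∀ x : ℝ, 0 < x → HasDerivAt G (gapD x - 1 / 2 * x⁻¹) x := by
    intro x hx
    exact (gap_hasDerivAt hx).sub ((Real.hasDerivAt_log (ne_of_gt hx)).const_mul (1 / 2))
  have hmono : MonotoneOn G (Ici (Real.sqrt 3)) := by
    apply monotoneOn_of_deriv_nonneg (convex_Ici _)
    · intro x hx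
      have hx0 : 0 < x := lt_of_lt_of_le h3p hx
      exact (hGd x hx0).differentiableAt.continuousAt.continuousWithinAt
    · intro x hx
      rw [interior_Ici] at hx
      have hx0 : 0 < x := lt_trans h3p hx
      exact (hGd x hx0).differentiableAt.differentiableWithinAt
    · intro x hx
      rw [interior_Ici] at hx
      have hx0 : 0 < x := lt_trans h3p hx
      rw [(hGd x hx0).deriv]
      have := gapD_ge (le_of_lt hx)
      have h1 : 1 / 2 * x⁻¹ = 1 / (2 * x) := by field_simp
      linarith [h1 ▸ this]
  have hbound : ∀ᶠ x in atTop, G (Real.sqrt 3) + 1 / 2 * Real.log x ≤ gapF x := by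
    filter_upwards [eventually_ge_atTop (Real.sqrt 3)] with x hx
    have := hmono (self_mem_Ici) hx hx
    simp only [hG] at this ⊢
    linarith
  apply tendsto_atTop_mono' atTop hbound
  apply tendsto_atTop_add_const_left
  exact Real.tendsto_log_atTop.const_mul_atTop (by norm_num)

/-- The exact T = 0 gap equation for the (0,0,1) state of Γ₄⁻ of O_h:
f(ν) = arcsinh(ν/√3) + (ν/6)√(3+ν²) + (ν³/(6√3))log(ν/(√3+√(3+ν²))) is
strictly increasing on (0,∞), tends to 0 at 0⁺ and to ∞ at ∞, hence
1/λ = f(ν) has a unique solution ν > 0 for each λ > 0. -/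
theorem exact_gap_equation_001 :
    StrictMonoOn (fun ν : ℝ =>
        Real.arsinh (ν / Real.sqrt 3) + ν / 6 * Real.sqrt (3 + ν ^ 2)
          + ν ^ 3 / (6 * Real.sqrt 3)
            * Real.log (ν / (Real.sqrt 3 + Real.sqrt (3 + ν ^ 2))))
      (Ioi 0) ∧
    Tendsto (fun ν : ℝ =>
        Real.arsinh (ν / Real.sqrt 3) + ν / 6 * Real.sqrt (3 + ν ^ 2)
          + ν ^ 3 / (6 * Real.sqrt 3)
            * Real.log (ν / (Real.sqrt 3 + Real.sqrt (3 + ν ^ 2))))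
      (nhdsWithin 0 (Ioi 0)) (nhds 0) ∧
    Tendsto (fun ν : ℝ =>
        Real.arsinh (ν / Real.sqrt 3) + ν / 6 * Real.sqrt (3 + ν ^ 2)
          + ν ^ 3 / (6 * Real.sqrt 3)
            * Real.log (ν / (Real.sqrt 3 + Real.sqrt (3 + ν ^ 2))))
      atTop atTop ∧
    (∀ lam : ℝ, 0 < lam → ∃! ν : ℝ, 0 < ν ∧
      Real.arsinh (ν / Real.sqrt 3) + ν / 6 * Real.sqrt (3 + ν ^ 2)
        + ν ^ 3 / (6 * Real.sqrt 3)
          * Real.log (ν / (Real.sqrt 3 + Real.sqrt (3 + ν ^ 2)))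
        = 1 / lam) := by
  refine ⟨gapF_mono, gapF_tendsto_zero, gapF_tendsto_atTop, ?_⟩
  intro lam hlam
  have hlt : (0:ℝ) < 1 / lam := by positivity
  -- get a with gapF a < 1/lam
  obtain ⟨a, ha1, (ha0 : a ∈ Ioi 0)⟩ :=
    ((gapF_tendsto_zero.eventually (eventually_lt_nhds hlt)).and self_mem_nhdsWithin).exists
  obtain ⟨b, hb1, hb0⟩ :=
    ((gapF_tendsto_atTop.eventually_gt_atTop (1 / lam)).and (eventually_gt_atTop 0)).exists
  have hab : a < b := by
    by_contra h
    push_neg at h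
    rcases eq_or_lt_of_le h with h | h
    · rw [h] at hb1; linarith
    · have := gapF_mono hb0 ha0 h
      linarith
  have hsub : Icc a b ⊆ Ioi 0 := fun x hx => lt_of_lt_of_le ha0 hx.1
  have hcont : ContinuousOn gapF (Icc a b) := fun x hx =>
    (gapF_contAt (hsub hx)).continuousWithinAt
  have hmem : (1 / lam) ∈ Icc (gapF a) (gapF b) := ⟨ha1.le, hb1.le⟩
  obtain ⟨ν, hνmem, hνval⟩ := intermediate_value_Icc hab.le hcont hmem
  refine ⟨ν, ⟨lt_of_lt_of_le ha0 hνmem.1, hνval⟩, ?_⟩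
  rintro μ ⟨hμ0, hμval⟩
  exact gapF_mono.injOn hμ0 (hsub hνmem) (by rw [hνval]; exact hμval)
end
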